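/- No mechanism that outputs maximizers of the Nash bargaining program is (2−ε)-incentive compatible for any ε > 0: in the n-agent instance above, by truthfully reporting the special agent gets utility 1, while by misreporting the same utilities as the others they get utility 2(n−1)/n + 1/n, and this ratio tends to 2 as n → ∞. -/

import Mathlib

def isPM {n : ℕ} (x : Fin n → Fin n → ℝ) : Prop :=
  (∀ i j, 0 ≤ x i j) ∧ (∀ i, ∑ j, x i j = 1) ∧ (∀ j, ∑ i, x i j = 1)

def util {n : ℕ} (u x : Fin n → Fin n → ℝ) (i : Fin n) : ℝ := ∑ j, u i j * x i j

/-- True utilities for the lower-bound instance on `m + 1` agents and goods: agent 0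
is the special agent (utility 2 for each of the `m` desirable goods `j ≠ 0`, utility
1 for the undesirable good `0`); the other agents have utility 1 for desirable goods
and 0 for the undesirable good. -/
def uTrue (m : ℕ) : Fin (m + 1) → Fin (m + 1) → ℝ := fun i j =>
  if i = 0 then (if j = 0 then 1 else 2) else (if j = 0 then 0 else 1)

/-- Misreported utilities: agent 0 reports the same utilities as everyone else. -/
def uLie (m : ℕ) : Fin (m + 1) → Fin (m + 1) → ℝ := fun _ j => if j = 0 then 0 else 1

namespace NashAux

lemma sum_ite_mul {m : ℕ} (f : Fin (m+1) → ℝ) (a b : ℝ) :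
    ∑ j, (if j = (0 : Fin (m+1)) then a else b) * f j = (a - b) * f 0 + b * ∑ j, f j := by
  have h : ∀ j : Fin (m+1), (if j = (0 : Fin (m+1)) then a else b) * f j
      = (a - b) * (if j = (0 : Fin (m+1)) then f j else 0) + b * f j := by
    intro j; split <;> ring
  simp_rw [h, Finset.sum_add_distrib, ← Finset.mul_sum,
    Finset.sum_ite_eq' Finset.univ (0 : Fin (m+1)) f, Finset.mem_univ, if_true]

lemma entry_le_one {m : ℕ} (x : Fin (m+1) → Fin (m+1) → ℝ) (hx : isPM x) (i j : Fin (m+1)) :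
    x i j ≤ 1 := by
  have h := hx.2.2 j
  calc x i j ≤ ∑ i', x i' j :=
        Finset.single_le_sum (fun i' _ => hx.1 i' j) (Finset.mem_univ i)
    _ = 1 := h

lemma util_uLie {m : ℕ} (z : Fin (m+1) → Fin (m+1) → ℝ) (hz : ∀ i, ∑ j, z i j = 1)
    (i : Fin (m+1)) : util (uLie m) z i = 1 - z i 0 := by
  unfold util uLie
  rw [sum_ite_mul, hz i]; ring

lemma util_uTrue_zero {m : ℕ} (z : Fin (m+1) → Fin (m+1) → ℝ) (hz : ∀ i, ∑ j, z i j = 1) :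
    util (uTrue m) z 0 = 2 - z 0 0 := by
  unfold util uTrue
  simp only [eq_self_iff_true, if_true]
  rw [sum_ite_mul, hz 0]; ring

lemma util_uTrue_succ {m : ℕ} (z : Fin (m+1) → Fin (m+1) → ℝ) (hz : ∀ i, ∑ j, z i j = 1)
    (i : Fin m) : util (uTrue m) z i.succ = 1 - z i.succ 0 := by
  unfold util uTrue
  simp only [if_neg (Fin.succ_ne_zero i)]
  rw [sum_ite_mul, hz i.succ]; ring

lemma prodLie {m : ℕ} (z : Fin (m+1) → Fin (m+1) → ℝ) (hz : ∀ i, ∑ j, z i j = 1) :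
    ∏ i, util (uLie m) z i = ∏ i, (1 - z i 0) :=
  Finset.prod_congr rfl fun i _ => util_uLie z hz i

lemma prodTrue {m : ℕ} (z : Fin (m+1) → Fin (m+1) → ℝ) (hz : ∀ i, ∑ j, z i j = 1) :
    ∏ i, util (uTrue m) z i = (2 - z 0 0) * ∏ i : Fin m, (1 - z i.succ 0) := by
  rw [Fin.prod_univ_succ, util_uTrue_zero z hz]
  congr 1
  exact Finset.prod_congr rfl fun i _ => util_uTrue_succ z hz i

lemma one_add_sum_le_prod {ι : Type*} (s : Finset ι) (t : ι → ℝ) (h : ∀ i ∈ s, 0 ≤ t i) :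
    1 + ∑ i ∈ s, t i ≤ ∏ i ∈ s, (1 + t i) := by
  induction s using Finset.cons_induction with
  | empty => simp
  | cons a s ha ih =>
    rw [Finset.sum_cons, Finset.prod_cons]
    have h1 : 0 ≤ t a := h a (Finset.mem_cons_self a s)
    have h2 : ∀ i ∈ s, 0 ≤ t i := fun i hi => h i (Finset.mem_cons_of_mem hi)
    have h3 := ih h2
    have h4 : 0 ≤ ∑ i ∈ s, t i := Finset.sum_nonneg h2
    nlinarith

lemma prod_one_sub_sq_le {ι : Type*} [DecidableEq ι] (s : Finset ι) (t : ι → ℝ)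
    (h0 : ∀ i ∈ s, 0 ≤ t i) (h1 : ∀ i ∈ s, t i ≤ 1) {k : ι} (hk : k ∈ s) :
    ∏ i ∈ s, (1 - t i ^ 2) ≤ 1 - t k ^ 2 := by
  rw [← Finset.mul_prod_erase s _ hk]
  have hnn : ∀ i ∈ s.erase k, 0 ≤ 1 - t i ^ 2 := by
    intro i hi
    have := h0 i (Finset.mem_of_mem_erase hi)
    have := h1 i (Finset.mem_of_mem_erase hi)
    nlinarith
  have hle : ∏ i ∈ s.erase k, (1 - t i ^ 2) ≤ 1 := by
    apply Finset.prod_le_one hnn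
    intro i hi
    have := h0 i (Finset.mem_of_mem_erase hi); nlinarith
  have hkn : 0 ≤ 1 - t k ^ 2 := by
    have := h0 k hk; have := h1 k hk; nlinarith
  calc (1 - t k ^ 2) * ∏ i ∈ s.erase k, (1 - t i ^ 2) ≤ (1 - t k ^ 2) * 1 :=
        mul_le_mul_of_nonneg_left hle hkn
    _ = 1 - t k ^ 2 := mul_one _

noncomputable def idPM (m : ℕ) : Fin (m+1) → Fin (m+1) → ℝ := fun i j => if i = j then 1 else 0

lemma idPM_isPM (m : ℕ) : isPM (idPM m) := by
  refine ⟨fun i j => ?_, fun i => ?_, fun j => ?_⟩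
  · unfold idPM; split <;> norm_num
  · simp [idPM]
  · simp [idPM]

noncomputable def uniPM (m : ℕ) : Fin (m+1) → Fin (m+1) → ℝ := fun _ _ => 1 / (m + 1)

lemma uniPM_isPM (m : ℕ) : isPM (uniPM m) := by
  have h : ((m : ℝ) + 1) ≠ 0 := by positivity
  refine ⟨fun i j => ?_, fun i => ?_, fun j => ?_⟩
  · unfold uniPM; positivity
  all_goals
    simp only [uniPM, Finset.sum_const, Finset.card_univ, Fintype.card_fin, nsmul_eq_mul]
    field_simp
    simp

noncomputable def mkPM (m : ℕ) (t : Fin (m+1) → ℝ) : Fin (m+1) → Fin (m+1) → ℝ :=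
  fun i j => if j = 0 then t i else (1 - t i) / m

lemma mkPM_isPM (m : ℕ) (hm : 1 ≤ m) (t : Fin (m+1) → ℝ)
    (h0 : ∀ i, 0 ≤ t i) (h1 : ∀ i, t i ≤ 1) (hs : ∑ i, t i = 1) : isPM (mkPM m t) := by
  have hmR : (0 : ℝ) < m := by exact_mod_cast hm
  refine ⟨fun i j => ?_, fun i => ?_, fun j => ?_⟩
  · unfold mkPM; split
    · exact h0 i
    · exact div_nonneg (by have := h1 i; linarith) hmR.le
  · unfold mkPM
    rw [Fin.sum_univ_succ]
    simp only [eq_self_iff_true, if_true, if_neg (Fin.succ_ne_zero _)]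
    rw [Finset.sum_const, Finset.card_univ, Fintype.card_fin, nsmul_eq_mul]
    field_simp
    ring
  · unfold mkPM
    by_cases hj : j = 0
    · simp [hj, hs]
    · simp only [if_neg hj]
      rw [← Finset.sum_div, Finset.sum_sub_distrib, hs, Finset.sum_const,
        Finset.card_univ, Fintype.card_fin]
      field_simp
      simp

lemma xpart {m : ℕ} (hm : 1 ≤ m) (x : Fin (m+1) → Fin (m+1) → ℝ) (hx : isPM x)
    (hmax : ∀ z, isPM z → ∏ i, util (uTrue m) z i ≤ ∏ i, util (uTrue m) x i) :
    util (uTrue m) x 0 = 1 := by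
  obtain ⟨hxn, hxr, hxc⟩ := hx
  set t : Fin m → ℝ := fun i => x i.succ 0 with ht
  have ht0 : ∀ i, 0 ≤ t i := fun i => hxn i.succ 0
  have ht1 : ∀ i, t i ≤ 1 := fun i => entry_le_one x ⟨hxn, hxr, hxc⟩ i.succ 0
  have hcol : x 0 0 + ∑ i, t i = 1 := by
    have := hxc 0
    rwa [Fin.sum_univ_succ] at this
  -- identity gives value 1
  have hid := idPM_isPM m
  have hidval : ∏ i, util (uTrue m) (idPM m) i = 1 := by
    rw [prodTrue _ hid.2.1]
    have h1 : ∀ i : Fin m, idPM m i.succ 0 = 0 := by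
      intro i; simp [idPM, Fin.succ_ne_zero i]
    simp [idPM, Fin.succ_ne_zero]
    norm_num
  have hge : 1 ≤ ∏ i, util (uTrue m) x i := hidval ▸ hmax _ hid
  rw [prodTrue x hxr] at hge
  set S := ∑ i, t i with hS
  set P := ∏ i : Fin m, (1 - t i) with hP
  have h2a : 2 - x 0 0 = 1 + S := by linarith
  have hPn : 0 ≤ P := Finset.prod_nonneg fun i _ => by have := ht1 i; linarith
  have h1 : 1 + S ≤ ∏ i : Fin m, (1 + t i) :=
    one_add_sum_le_prod _ _ fun i _ => ht0 i
  have h2 : (∏ i : Fin m, (1 + t i)) * P = ∏ i : Fin m, (1 - t i ^ 2) := by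
    rw [hP, ← Finset.prod_mul_distrib]
    exact Finset.prod_congr rfl fun i _ => by ring
  have hchain : 1 ≤ ∏ i : Fin m, (1 - t i ^ 2) := by
    calc (1 : ℝ) ≤ (2 - x 0 0) * P := hge
      _ = (1 + S) * P := by rw [h2a]
      _ ≤ (∏ i : Fin m, (1 + t i)) * P := mul_le_mul_of_nonneg_right h1 hPn
      _ = _ := h2
  have hzero : ∀ k : Fin m, t k = 0 := by
    intro k
    have := prod_one_sub_sq_le Finset.univ t (fun i _ => ht0 i) (fun i _ => ht1 i)
      (Finset.mem_univ k)
    have h3 : t k ^ 2 ≤ 0 := by linarith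
    have := ht0 k
    nlinarith
  have hS0 : S = 0 := Finset.sum_eq_zero fun i _ => hzero i
  have hx00 : x 0 0 = 1 := by linarith
  rw [util_uTrue_zero x hxr, hx00]; norm_num

lemma ypart {m : ℕ} (hm : 1 ≤ m) (y : Fin (m+1) → Fin (m+1) → ℝ) (hy : isPM y)
    (hmax : ∀ z, isPM z → ∏ i, util (uLie m) z i ≤ ∏ i, util (uLie m) y i) :
    y 0 0 = 1 / (m + 1) := by
  obtain ⟨hyn, hyr, hyc⟩ := hy
  have hy1 : ∀ i j, y i j ≤ 1 := entry_le_one y ⟨hyn, hyr, hyc⟩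
  have hcol : ∑ i, y i 0 = 1 := hyc 0
  have hm1 : (0 : ℝ) < (m : ℝ) + 1 := by positivity
  -- uniform PM has positive product
  have huni := uniPM_isPM m
  have hunival : 0 < ∏ i, util (uLie m) (uniPM m) i := by
    rw [prodLie _ huni.2.1]
    apply Finset.prod_pos
    intro i _
    have : (1 : ℝ) / (m + 1) < 1 := by
      rw [div_lt_one hm1]
      have : (1 : ℝ) ≤ m := by exact_mod_cast hm
      linarith
    simp only [uniPM]
    linarith
  have hpos : 0 < ∏ i, (1 - y i 0) := by
    have := hmax _ huni
    rw [prodLie y hyr] at this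
    exact lt_of_lt_of_le hunival this
  by_contra hne
  have hk : ∃ k : Fin (m+1), y k 0 ≠ y 0 0 := by
    by_contra h
    push_neg at h
    apply hne
    have : ∑ i, y i 0 = (m + 1 : ℝ) * y 0 0 := by
      rw [Finset.sum_congr rfl fun i _ => h i, Finset.sum_const, Finset.card_univ,
        Fintype.card_fin]
      ring
    rw [this] at hcol
    field_simp
    linarith
  obtain ⟨k, hkne⟩ := hk
  have hk0 : k ≠ 0 := fun h => hkne (by rw [h])
  set a := y 0 0 with ha
  set b := y k 0 with hb
  set c := (a + b) / 2 with hc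
  set t' : Fin (m+1) → ℝ := fun i => if i = 0 then c else if i = k then c else y i 0 with ht'
  have ha0 : 0 ≤ a := by rw [ha]; exact hyn 0 0
  have ha1 : a ≤ 1 := by rw [ha]; exact hy1 0 0
  have hb0 : 0 ≤ b := by rw [hb]; exact hyn k 0
  have hb1 : b ≤ 1 := by rw [hb]; exact hy1 k 0
  have hca : 0 ≤ c ∧ c ≤ 1 := by
    constructor <;> (rw [hc]; linarith)
  have ht'0 : ∀ i, 0 ≤ t' i := by
    intro i; rw [ht']; dsimp only; split
    · exact hca.1
    · split
      · exact hca.1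
      · exact hyn i 0
  have ht'1 : ∀ i, t' i ≤ 1 := by
    intro i; rw [ht']; dsimp only; split
    · exact hca.2
    · split
      · exact hca.2
      · exact hy1 i 0
  have hkmem : k ∈ (Finset.univ : Finset (Fin (m+1))).erase 0 :=
    Finset.mem_erase.mpr ⟨hk0, Finset.mem_univ k⟩
  -- decomposition of sums/products over univ
  have hdecompS : ∀ f : Fin (m+1) → ℝ,
      ∑ i, f i = f 0 + f k + ∑ i ∈ (Finset.univ.erase 0).erase k, f i := by
    intro f
    rw [← Finset.add_sum_erase _ f (Finset.mem_univ 0), ← Finset.add_sum_erase _ f hkmem]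
    ring
  have hdecompP : ∀ f : Fin (m+1) → ℝ,
      ∏ i, f i = f 0 * f k * ∏ i ∈ (Finset.univ.erase 0).erase k, f i := by
    intro f
    rw [← Finset.mul_prod_erase _ f (Finset.mem_univ 0), ← Finset.mul_prod_erase _ f hkmem]
    ring
  have hrest : ∀ i ∈ (Finset.univ.erase (0 : Fin (m+1))).erase k, t' i = y i 0 := by
    intro i hi
    obtain ⟨hik, hi0⟩ := Finset.mem_erase.mp hi
    have hi0' := (Finset.mem_erase.mp hi0).1
    rw [ht']; dsimp only; rw [if_neg hi0', if_neg hik]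
  have ht'sum : ∑ i, t' i = 1 := by
    rw [hdecompS t', Finset.sum_congr rfl hrest]
    have h0' : t' 0 = c := by simp [ht']
    have hk' : t' k = c := by simp [ht', hk0]
    rw [h0', hk']
    have := hdecompS (fun i => y i 0)
    rw [hcol] at this
    linarith
  have hPM' := mkPM_isPM m hm t' ht'0 ht'1 ht'sum
  have hle := hmax _ hPM'
  rw [prodLie y hyr, prodLie _ hPM'.2.1] at hle
  have hmk : ∀ i, mkPM m t' i 0 = t' i := fun i => if_pos rfl
  simp only [hmk] at hle
  -- strict inequality contradiction
  set R := ∏ i ∈ (Finset.univ.erase (0 : Fin (m+1))).erase k, (1 - y i 0) with hR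
  have hyP : ∏ i, (1 - y i 0) = (1 - a) * (1 - b) * R := by
    rw [hdecompP (fun i => 1 - y i 0)]
  have ht'P : ∏ i, (1 - t' i) = (1 - c) * (1 - c) * R := by
    rw [hdecompP (fun i => 1 - t' i)]
    have h0' : t' 0 = c := by simp [ht']
    have hk' : t' k = c := by simp [ht', hk0]
    rw [h0', hk']
    congr 1
    exact Finset.prod_congr rfl fun i hi => by rw [hrest i hi]
  have hRnn : 0 ≤ R :=
    Finset.prod_nonneg fun i hi => by have := hy1 i 0; linarith
  have hRpos : 0 < R := by
    rcases hRnn.eq_or_lt with h | h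
    · exfalso
      rw [hyP, ← h, mul_zero] at hpos
      exact lt_irrefl 0 hpos
    · exact h
  have habne : a - b ≠ 0 := sub_ne_zero.mpr (Ne.symm hkne)
  have hab2 : 0 < (a - b) ^ 2 := (sq_nonneg _).lt_of_ne' (pow_ne_zero 2 habne)
  have hstrict : (1 - a) * (1 - b) < (1 - c) * (1 - c) := by
    rw [hc]; nlinarith
  rw [hyP, ht'P] at hle
  nlinarith

end NashAux

/-- no mechanism outputting Nash bargaining maximizers is
(2−ε)-incentive compatible for any ε > 0: in the instance above (with `n = m + 1`
agents), truthful reporting gives the special agent utility 1, misreporting gives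
true utility 2(n−1)/n + 1/n, and this exceeds (2−ε)·1 for large n. -/
theorem nash_not_two_minus_eps_ic :
    ∀ ε : ℝ, 0 < ε → ∃ m : ℕ, 1 ≤ m ∧
      ∀ x y : Fin (m + 1) → Fin (m + 1) → ℝ, isPM x → isPM y →
        (∀ z, isPM z → ∏ i, util (uTrue m) z i ≤ ∏ i, util (uTrue m) x i) →
        (∀ z, isPM z → ∏ i, util (uLie m) z i ≤ ∏ i, util (uLie m) y i) →
        util (uTrue m) x 0 = 1 ∧
        util (uTrue m) y 0 = 2 * (m : ℝ) / (m + 1) + 1 / (m + 1) ∧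
        (2 - ε) * util (uTrue m) x 0 < util (uTrue m) y 0 := by
  intro ε hε
  refine ⟨max 1 ⌈1/ε⌉₊, le_max_left _ _, ?_⟩
  set m := max 1 ⌈1/ε⌉₊ with hmdef
  have hm : 1 ≤ m := le_max_left _ _
  intro x y hx hy hmx hmy
  have h1 : util (uTrue m) x 0 = 1 := NashAux.xpart hm x hx hmx
  have hy0 : y 0 0 = 1/((m:ℝ)+1) := NashAux.ypart hm y hy hmy
  have hm1 : (0:ℝ) < (m:ℝ)+1 := by positivity
  have h2 : util (uTrue m) y 0 = 2 - 1/((m:ℝ)+1) := by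
    rw [NashAux.util_uTrue_zero y hy.2.1, hy0]
  have heq : (2:ℝ) - 1/((m:ℝ)+1) = 2*(m:ℝ)/((m:ℝ)+1) + 1/((m:ℝ)+1) := by
    field_simp
    ring
  refine ⟨h1, by rw [h2, heq], ?_⟩
  rw [h1, h2, mul_one]
  have hceil : 1/ε ≤ (m:ℝ) := by
    calc 1/ε ≤ (⌈1/ε⌉₊ : ℝ) := Nat.le_ceil _
    _ ≤ m := by exact_mod_cast le_max_right 1 _
  have hlt : 1/((m:ℝ)+1) < ε := by
    rw [div_lt_iff₀ hm1]
    have h3 : 1/ε < (m:ℝ)+1 := by linarith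
    calc (1:ℝ) = ε * (1/ε) := by field_simp
    _ < ε * ((m:ℝ)+1) := mul_lt_mul_of_pos_left h3 hε
  linarith
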